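/- Let β ≥ 0, ε ∈ [0,1), and let v : [0,1] → ℝ. Suppose there exist y̲, ȳ ∈ [0,1] with y̲ ≤ ȳ such that y ↦ v(y) − ln(1+βy) is strictly increasing on [0,y̲] and strictly decreasing on [y̲,1], and y ↦ v(y) − ln(1−εy) is strictly increasing on [0,ȳ] and strictly decreasing on [ȳ,1]. Then for every x ∈ [0,1], sup_{y∈[0,1]} ( v(y) − ln((1+βy)/(1+βx))·1_{x<y} − ln((1−εy)/(1−εx))·1_{x>y} ) equals v(y̲) − ln((1+β·y̲)/(1+βx)) if x < y̲; equals v(x) if y̲ ≤ x ≤ ȳ; and equals v(ȳ) − ln((1−ε·ȳ)/(1−εx)) if x > ȳ. -/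
import Mathlib


open Set

/-- The net value of rebalancing the wealth fraction in the stock from `x` to `y`,
accounting for proportional transaction costs. -/
noncomputable def rebalanceGain (β ε : ℝ) (v : ℝ → ℝ) (x y : ℝ) : ℝ :=
  v y - Real.log ((1 + β * y) / (1 + β * x)) * (if x < y then 1 else 0)
      - Real.log ((1 - ε * y) / (1 - ε * x)) * (if y < x then 1 else 0)

/-- The explicit value of `sup_{y∈[0,1]} G_x(y)` in the three regimes `x < y̲`,
`y̲ ≤ x ≤ ȳ`, and `x > ȳ`. -/
theorem rebalance_sup_formula (β ε : ℝ) (hβ : 0 ≤ β) (hε0 : 0 ≤ ε) (hε1 : ε < 1)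
    (v : ℝ → ℝ) (yl yu : ℝ)
    (hyl : yl ∈ Icc (0:ℝ) 1) (hyu : yu ∈ Icc (0:ℝ) 1) (hle : yl ≤ yu)
    (hmono₁ : StrictMonoOn (fun y => v y - Real.log (1 + β * y)) (Icc 0 yl))
    (hanti₁ : StrictAntiOn (fun y => v y - Real.log (1 + β * y)) (Icc yl 1))
    (hmono₂ : StrictMonoOn (fun y => v y - Real.log (1 - ε * y)) (Icc 0 yu))
    (hanti₂ : StrictAntiOn (fun y => v y - Real.log (1 - ε * y)) (Icc yu 1)) :
    ∀ x ∈ Icc (0:ℝ) 1,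
      (x < yl → sSup (rebalanceGain β ε v x '' Icc 0 1)
          = v yl - Real.log ((1 + β * yl) / (1 + β * x))) ∧
      (yl ≤ x → x ≤ yu → sSup (rebalanceGain β ε v x '' Icc 0 1) = v x) ∧
      (yu < x → sSup (rebalanceGain β ε v x '' Icc 0 1)
          = v yu - Real.log ((1 - ε * yu) / (1 - ε * x))) := by
  intro x hx
  have hbx : 0 < 1 + β * x := by nlinarith [hx.1, hx.2]
  have hsx : 0 < 1 - ε * x := by nlinarith [hx.1, hx.2]
  have hbp : ∀ z ∈ Icc (0:ℝ) 1, 0 < 1 + β * z := fun z hz => by nlinarith [hz.1, hz.2]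
  have hsp : ∀ z ∈ Icc (0:ℝ) 1, 0 < 1 - ε * z := fun z hz => by nlinarith [hz.1, hz.2]
  have hG : ∀ y ∈ Icc (0:ℝ) 1, rebalanceGain β ε v x y =
      if x < y then (v y - Real.log (1 + β * y)) + Real.log (1 + β * x)
      else if y < x then (v y - Real.log (1 - ε * y)) + Real.log (1 - ε * x)
      else v x := by
    intro y hy
    unfold rebalanceGain
    rcases lt_trichotomy x y with h | h | h
    · rw [if_pos h, if_pos h, if_neg (not_lt.2 h.le),
        Real.log_div (hbp y hy).ne' hbx.ne']
      ring
    · subst h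
      simp [lt_irrefl]
    · rw [if_neg (not_lt.2 h.le), if_pos h, if_neg (not_lt.2 h.le), if_pos h,
        Real.log_div (hsp y hy).ne' hsx.ne']
      ring
  have hfmax : ∀ y ∈ Icc (0:ℝ) 1, v y - Real.log (1 + β * y) ≤ v yl - Real.log (1 + β * yl) := by
    intro y hy
    rcases le_or_gt y yl with h | h
    · exact hmono₁.monotoneOn ⟨hy.1, h⟩ ⟨hyl.1, le_rfl⟩ h
    · exact (hanti₁ ⟨le_rfl, hyl.2⟩ ⟨h.le, hy.2⟩ h).le
  have hgmax : ∀ y ∈ Icc (0:ℝ) 1, v y - Real.log (1 - ε * y) ≤ v yu - Real.log (1 - ε * yu) := by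
    intro y hy
    rcases le_or_gt y yu with h | h
    · exact hmono₂.monotoneOn ⟨hy.1, h⟩ ⟨hyu.1, le_rfl⟩ h
    · exact (hanti₂ ⟨le_rfl, hyu.2⟩ ⟨h.le, hy.2⟩ h).le
  refine ⟨?_, ?_, ?_⟩
  · intro hxl
    have hlog : Real.log ((1 + β * yl) / (1 + β * x))
        = Real.log (1 + β * yl) - Real.log (1 + β * x) :=
      Real.log_div (hbp yl hyl).ne' hbx.ne'
    apply IsGreatest.csSup_eq
    constructor
    · exact ⟨yl, hyl, by rw [hG yl hyl, if_pos hxl, hlog]; ring⟩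
    · rintro z ⟨y, hy, rfl⟩
      rw [hG y hy, hlog]
      have hfx : v x - Real.log (1 + β * x) ≤ v yl - Real.log (1 + β * yl) :=
        (hmono₁ ⟨hx.1, hxl.le⟩ ⟨hyl.1, le_rfl⟩ hxl).le
      split_ifs with h1 h2
      · have := hfmax y hy; linarith
      · have hgy : v y - Real.log (1 - ε * y) ≤ v x - Real.log (1 - ε * x) :=
          (hmono₂ ⟨hy.1, by linarith⟩ ⟨hx.1, by linarith⟩ h2).le
        linarith
      · linarith
  · intro h1 h2
    apply IsGreatest.csSup_eq
    constructor
    · exact ⟨x, hx, by rw [hG x hx]; simp⟩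
    · rintro z ⟨y, hy, rfl⟩
      rw [hG y hy]
      split_ifs with ha hb
      · have hfy : v y - Real.log (1 + β * y) ≤ v x - Real.log (1 + β * x) :=
          (hanti₁ ⟨h1, hx.2⟩ ⟨by linarith [hy.1], hy.2⟩ ha).le
        linarith
      · have hgy : v y - Real.log (1 - ε * y) ≤ v x - Real.log (1 - ε * x) :=
          (hmono₂ ⟨hy.1, by linarith⟩ ⟨hx.1, h2⟩ hb).le
        linarith
      · exact le_rfl
  · intro hxu
    have hlog : Real.log ((1 - ε * yu) / (1 - ε * x))
        = Real.log (1 - ε * yu) - Real.log (1 - ε * x) :=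
      Real.log_div (hsp yu hyu).ne' hsx.ne'
    apply IsGreatest.csSup_eq
    constructor
    · exact ⟨yu, hyu, by rw [hG yu hyu, if_neg (not_lt.2 hxu.le), if_pos hxu, hlog]; ring⟩
    · rintro z ⟨y, hy, rfl⟩
      rw [hG y hy, hlog]
      have hgx : v x - Real.log (1 - ε * x) ≤ v yu - Real.log (1 - ε * yu) :=
        (hanti₂ ⟨le_rfl, hyu.2⟩ ⟨hxu.le, hx.2⟩ hxu).le
      split_ifs with h1 h2
      · have hfy : v y - Real.log (1 + β * y) ≤ v x - Real.log (1 + β * x) :=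
          (hanti₁ ⟨by linarith, hx.2⟩ ⟨by linarith, hy.2⟩ h1).le
        linarith
      · have := hgmax y hy; linarith
      · linarith
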